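/- Let I ⊆ ℂ[z₁,…,z_m] be an ideal, w₀ ∈ ℂ^m, and J = 𝔪_{w₀} I. Then the characteristic space of J at w₀ is V_{w₀}(J) = {q ∈ ℂ[z] : ∂q/∂z_j ∈ V_{w₀}(I) for all j = 1,…,m}, where V_w(F) = {q : q(D)f|_w = 0 for all f ∈ F}. -/

import Mathlib

open MvPolynomial

/-- The Wirtinger partial derivative `∂f/∂z_i` of a function of `m` complex variables. -/
noncomputable def pderivFun {m : ℕ} (i : Fin m) (f : (Fin m → ℂ) → ℂ) : (Fin m → ℂ) → ℂ :=
  fun z => fderiv ℂ f z (Pi.single i 1)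

/-- The iterated derivative `∂^α f` for a multi-index `α`. -/
noncomputable def mderiv {m : ℕ} (α : Fin m → ℕ) (f : (Fin m → ℂ) → ℂ) : (Fin m → ℂ) → ℂ :=
  (List.finRange m).foldr (fun i g => (pderivFun i)^[α i] g) f

/-- The constant-coefficient differential operator `q(D) = Σ a_α ∂^α` associated to the
polynomial `q = Σ a_α z^α`. -/
noncomputable def applyDiff {m : ℕ} (q : MvPolynomial (Fin m) ℂ)
    (f : (Fin m → ℂ) → ℂ) : (Fin m → ℂ) → ℂ :=
  fun z => ∑ α ∈ q.support, q.coeff α * mderiv (fun i => α i) f z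

/-- The characteristic space at `w` of an ideal `I`:
`V_w(I) = {q : q(D)f|_w = 0 for all f ∈ I}`. -/
def charSpaceI {m : ℕ} (w : Fin m → ℂ) (I : Ideal (MvPolynomial (Fin m) ℂ)) :
    Set (MvPolynomial (Fin m) ℂ) :=
  {q | ∀ p ∈ I, applyDiff q (fun z => MvPolynomial.eval z p) w = 0}

section Aux
variable {m : ℕ}


lemma hasFDerivAt_eval (p : MvPolynomial (Fin m) ℂ) (z : Fin m → ℂ) :
    HasFDerivAt (fun z : Fin m → ℂ => eval z p)
      (∑ j, eval z (pderiv j p) • (ContinuousLinearMap.proj j : (Fin m → ℂ) →L[ℂ] ℂ)) z := by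
  induction p using MvPolynomial.induction_on generalizing z with
  | C a =>
      have h0 : (∑ j, eval z (pderiv j (C a : MvPolynomial (Fin m) ℂ)) •
          (ContinuousLinearMap.proj j : (Fin m → ℂ) →L[ℂ] ℂ)) = 0 := by
        ext v; simp
      rw [h0]
      simp only [eval_C]
      exact hasFDerivAt_const (𝕜 := ℂ) a z
  | add p q hp hq =>
      have h0 : (∑ j, (eval z (pderiv j p) + eval z (pderiv j q)) •
            (ContinuousLinearMap.proj j : (Fin m → ℂ) →L[ℂ] ℂ)) =
          (∑ j, eval z (pderiv j p) • (ContinuousLinearMap.proj j : (Fin m → ℂ) →L[ℂ] ℂ)) +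
          (∑ j, eval z (pderiv j q) • (ContinuousLinearMap.proj j : (Fin m → ℂ) →L[ℂ] ℂ)) := by
        ext v; simp [add_mul, Finset.sum_add_distrib]
      simp only [map_add]
      rw [h0]
      exact (hp z).add (hq z)
  | mul_X p i hp =>
      have hXi : HasFDerivAt (fun z : Fin m → ℂ => z i)
          (ContinuousLinearMap.proj i : (Fin m → ℂ) →L[ℂ] ℂ) z := hasFDerivAt_apply i z
      have key := (hp z).mul hXi
      have h0 : (∑ j, eval z (pderiv j (p * X i)) •
            (ContinuousLinearMap.proj j : (Fin m → ℂ) →L[ℂ] ℂ)) =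
          eval z p • (ContinuousLinearMap.proj i : (Fin m → ℂ) →L[ℂ] ℂ) +
          z i • ∑ j, eval z (pderiv j p) •
            (ContinuousLinearMap.proj j : (Fin m → ℂ) →L[ℂ] ℂ) := by
        ext v
        simp [pderiv_mul, pderiv_X, Pi.single_apply, apply_ite (eval z),
          Finset.sum_add_distrib, mul_ite, ite_mul, mul_add, mul_zero,
          Finset.sum_ite_eq, Finset.sum_ite_eq',
          Finset.mul_sum, mul_comm, mul_left_comm]
      simp only [eval_mul, eval_X]
      rw [h0]
      exact key

noncomputable def foldD (l : List (Fin m)) (α : Fin m → ℕ) (p : MvPolynomial (Fin m) ℂ) :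
    MvPolynomial (Fin m) ℂ :=
  l.foldr (fun i q => (⇑(pderiv i))^[α i] q) p

lemma iter_pderiv_zero (i : Fin m) (n : ℕ) : (⇑(pderiv i))^[n] (0 : MvPolynomial (Fin m) ℂ) = 0 := by
  induction n with
  | zero => rfl
  | succ n ih => rw [Function.iterate_succ_apply, map_zero, ih]

lemma iter_pderiv_add (i : Fin m) (n : ℕ) (p q : MvPolynomial (Fin m) ℂ) :
    (⇑(pderiv i))^[n] (p + q) = (⇑(pderiv i))^[n] p + (⇑(pderiv i))^[n] q := by
  induction n generalizing p q with
  | zero => rfl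
  | succ n ih => rw [Function.iterate_succ_apply, map_add, ih,
      Function.iterate_succ_apply, Function.iterate_succ_apply]

lemma iter_pderiv_nsmul (i : Fin m) (n k : ℕ) (p : MvPolynomial (Fin m) ℂ) :
    (⇑(pderiv i))^[n] (k • p) = k • (⇑(pderiv i))^[n] p := by
  induction n generalizing p with
  | zero => rfl
  | succ n ih => rw [Function.iterate_succ_apply, map_nsmul, ih, Function.iterate_succ_apply]

lemma iter_pderiv_sub_mul_ne (i j : Fin m) (h : j ≠ i) (c : ℂ) (n : ℕ)
    (f : MvPolynomial (Fin m) ℂ) :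
    (⇑(pderiv i))^[n] ((X j - C c) * f) = (X j - C c) * (⇑(pderiv i))^[n] f := by
  induction n generalizing f with
  | zero => rfl
  | succ n ih =>
      rw [Function.iterate_succ_apply, pderiv_mul, map_sub, pderiv_X_of_ne h, pderiv_C,
        sub_zero, zero_mul, zero_add, ih, Function.iterate_succ_apply]

lemma iter_pderiv_sub_mul_self (j : Fin m) (c : ℂ) (n : ℕ) (f : MvPolynomial (Fin m) ℂ) :
    (⇑(pderiv j))^[n] ((X j - C c) * f)
      = (X j - C c) * (⇑(pderiv j))^[n] f + n • (⇑(pderiv j))^[n - 1] f := by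
  induction n generalizing f with
  | zero => simp
  | succ n ih =>
      rw [Function.iterate_succ_apply, pderiv_mul, map_sub, pderiv_X_self, pderiv_C, sub_zero,
        one_mul, iter_pderiv_add, ih]
      cases n with
      | zero => simp [add_comm]
      | succ k =>
          rw [← Function.iterate_succ_apply, ← Function.iterate_succ_apply]
          simp only [Nat.add_sub_cancel, Nat.succ_sub_one, Nat.succ_eq_add_one]
          conv_rhs => rw [succ_nsmul]
          abel

lemma foldD_zero (l : List (Fin m)) (α : Fin m → ℕ) : foldD l α 0 = 0 := by
  induction l with
  | nil => rfl
  | cons i l ih => simp only [foldD, List.foldr_cons] at ih ⊢; rw [ih, iter_pderiv_zero]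

lemma foldD_add (l : List (Fin m)) (α : Fin m → ℕ) (p q : MvPolynomial (Fin m) ℂ) :
    foldD l α (p + q) = foldD l α p + foldD l α q := by
  induction l with
  | nil => rfl
  | cons i l ih => simp only [foldD, List.foldr_cons] at ih ⊢; rw [ih, iter_pderiv_add]

lemma foldD_congr (l : List (Fin m)) {α β : Fin m → ℕ} (h : ∀ i ∈ l, α i = β i)
    (p : MvPolynomial (Fin m) ℂ) : foldD l α p = foldD l β p := by
  induction l with
  | nil => rfl
  | cons i l ih =>
      simp only [foldD, List.foldr_cons] at ih ⊢
      rw [ih fun j hj => h j (List.mem_cons_of_mem i hj), h i (List.mem_cons_self)]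

lemma foldD_sub_mul_not_mem (l : List (Fin m)) {j : Fin m} (hj : j ∉ l) (α : Fin m → ℕ)
    (c : ℂ) (f : MvPolynomial (Fin m) ℂ) :
    foldD l α ((X j - C c) * f) = (X j - C c) * foldD l α f := by
  induction l with
  | nil => rfl
  | cons i l ih =>
      have hji : j ≠ i := fun h => hj (h ▸ List.mem_cons_self)
      have hjl : j ∉ l := fun h => hj (List.mem_cons_of_mem i h)
      simp only [foldD, List.foldr_cons] at ih ⊢
      rw [ih hjl, iter_pderiv_sub_mul_ne i j hji]

lemma foldD_cons (i : Fin m) (l : List (Fin m)) (α : Fin m → ℕ) (p : MvPolynomial (Fin m) ℂ) :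
    foldD (i :: l) α p = (⇑(pderiv i))^[α i] (foldD l α p) := rfl

lemma foldD_sub_mul_mem (l : List (Fin m)) (hn : l.Nodup) {j : Fin m} (hj : j ∈ l)
    (α : Fin m → ℕ) (c : ℂ) (f : MvPolynomial (Fin m) ℂ) :
    foldD l α ((X j - C c) * f)
      = (X j - C c) * foldD l α f
        + (α j) • foldD l (Function.update α j (α j - 1)) f := by
  induction l with
  | nil => simp at hj
  | cons i l ih =>
      rcases List.nodup_cons.mp hn with ⟨hil, hln⟩
      by_cases hji : j = i
      · subst hji
        have hjl : j ∉ l := hil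
        have h2 : foldD (j :: l) (Function.update α j (α j - 1)) f
            = (⇑(pderiv j))^[α j - 1] (foldD l α f) := by
          rw [foldD_cons, Function.update_self,
            foldD_congr l (fun i hi => Function.update_of_ne (fun h => hjl (by rw [← h]; exact hi)) _ _) f]
        rw [foldD_cons, foldD_cons, h2, foldD_sub_mul_not_mem l hjl,
          iter_pderiv_sub_mul_self]
      · have hji' : j ≠ i := hji
        have hjl : j ∈ l := List.mem_of_ne_of_mem hji' hj
        have h3 : foldD (i :: l) (Function.update α j (α j - 1)) f
            = (⇑(pderiv i))^[α i] (foldD l (Function.update α j (α j - 1)) f) := by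
          rw [foldD_cons, Function.update_of_ne (Ne.symm hji')]
        rw [foldD_cons, foldD_cons, h3, ih hln hjl, iter_pderiv_add,
          iter_pderiv_sub_mul_ne i j hji', iter_pderiv_nsmul]

noncomputable def Aop (q p : MvPolynomial (Fin m) ℂ) : MvPolynomial (Fin m) ℂ :=
  ∑ α ∈ q.support, q.coeff α • foldD (List.finRange m) (fun i => α i) p

lemma Aop_zero_right (q : MvPolynomial (Fin m) ℂ) : Aop q 0 = 0 := by
  simp [Aop, foldD_zero]

lemma Aop_add_right (q p₁ p₂ : MvPolynomial (Fin m) ℂ) :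
    Aop q (p₁ + p₂) = Aop q p₁ + Aop q p₂ := by
  simp [Aop, foldD_add, smul_add, Finset.sum_add_distrib]

lemma Aop_eq_sum_subset {q : MvPolynomial (Fin m) ℂ} {S : Finset (Fin m →₀ ℕ)}
    (hS : q.support ⊆ S) (p : MvPolynomial (Fin m) ℂ) :
    Aop q p = ∑ α ∈ S, q.coeff α • foldD (List.finRange m) (fun i => α i) p := by
  refine Finset.sum_subset hS fun α _ hα => ?_
  rw [MvPolynomial.notMem_support_iff.mp hα, zero_smul]

lemma Aop_add_left (q₁ q₂ p : MvPolynomial (Fin m) ℂ) :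
    Aop (q₁ + q₂) p = Aop q₁ p + Aop q₂ p := by
  rw [Aop_eq_sum_subset (S := q₁.support ∪ q₂.support) (MvPolynomial.support_add),
    Aop_eq_sum_subset (S := q₁.support ∪ q₂.support) (Finset.subset_union_left),
    Aop_eq_sum_subset (S := q₁.support ∪ q₂.support) (Finset.subset_union_right),
    ← Finset.sum_add_distrib]
  simp [MvPolynomial.coeff_add, add_smul]

lemma Aop_monomial (α : Fin m →₀ ℕ) (a : ℂ) (p : MvPolynomial (Fin m) ℂ) :
    Aop (monomial α a) p = a • foldD (List.finRange m) (fun i => α i) p := by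
  by_cases ha : a = 0
  · simp [ha, Aop, MvPolynomial.monomial_zero]
  · rw [Aop, MvPolynomial.support_monomial, if_neg ha, Finset.sum_singleton,
      MvPolynomial.coeff_monomial, if_pos rfl]

lemma Aop_leibniz (j : Fin m) (c : ℂ) (q f : MvPolynomial (Fin m) ℂ) :
    Aop q ((X j - C c) * f)
      = (X j - C c) * Aop q f + Aop (pderiv j q) f := by
  induction q using MvPolynomial.induction_on' with
  | add q₁ q₂ h1 h2 =>
      rw [Aop_add_left, h1, h2, map_add, Aop_add_left, Aop_add_left]
      ring
  | monomial α a =>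
      have hupdate : (fun i => (α - Finsupp.single j 1 : Fin m →₀ ℕ) i)
          = Function.update (fun i => α i) j (α j - 1) := by
        funext i
        by_cases hij : i = j
        · subst hij; simp [Function.update_self]
        · simp [Function.update_of_ne hij, Finsupp.single_apply, Ne.symm hij]
      rw [Aop_monomial, Aop_monomial, pderiv_monomial, Aop_monomial,
        foldD_sub_mul_mem (List.finRange m) (List.nodup_finRange m)
          (List.mem_finRange j) (fun i => α i) c f,
        smul_add, hupdate]
      congr 1
      · rw [mul_smul_comm]
      · rw [← Nat.cast_smul_eq_nsmul ℂ (α j), smul_smul]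

lemma pderivFun_eval (i : Fin m) (p : MvPolynomial (Fin m) ℂ) :
    pderivFun i (fun z => eval z p) = fun z => eval z (pderiv i p) := by
  funext z
  rw [pderivFun, (hasFDerivAt_eval p z).fderiv]
  simp [Pi.single_apply, Finset.sum_ite_eq, mul_ite]

lemma iter_pderivFun_eval (i : Fin m) (n : ℕ) (p : MvPolynomial (Fin m) ℂ) :
    (pderivFun i)^[n] (fun z => eval z p) = fun z => eval z ((⇑(pderiv i))^[n] p) := by
  induction n generalizing p with
  | zero => simp
  | succ n ih =>
      rw [Function.iterate_succ_apply, Function.iterate_succ_apply, pderivFun_eval, ih]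


lemma foldD_eval (l : List (Fin m)) (α : Fin m → ℕ) (p : MvPolynomial (Fin m) ℂ) :
    l.foldr (fun i g => (pderivFun i)^[α i] g) (fun z => eval z p)
      = fun z => eval z (foldD l α p) := by
  induction l with
  | nil => rfl
  | cons i l ih => rw [List.foldr_cons, ih, iter_pderivFun_eval]; rfl

lemma mderiv_eval (α : Fin m → ℕ) (p : MvPolynomial (Fin m) ℂ) :
    mderiv α (fun z => eval z p) = fun z => eval z (foldD (List.finRange m) α p) :=
  foldD_eval _ _ _

lemma sub_C_eval_mem_span (w : Fin m → ℂ) (p : MvPolynomial (Fin m) ℂ) :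
    p - C (eval w p) ∈
      Ideal.span (Set.range fun j => (X j - C (w j) : MvPolynomial (Fin m) ℂ)) := by
  induction p using MvPolynomial.induction_on with
  | C a => simp
  | add p q hp hq =>
      have : p + q - C (eval w (p + q)) = (p - C (eval w p)) + (q - C (eval w q)) := by
        rw [map_add, map_add]; ring
      rw [this]
      exact Ideal.add_mem _ hp hq
  | mul_X p i hp =>
      have : p * X i - C (eval w (p * X i))
          = p * (X i - C (w i)) + C (w i) * (p - C (eval w p)) := by
        rw [map_mul, eval_X, map_mul]; ring
      rw [this]
      exact Ideal.add_mem _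
        (Ideal.mul_mem_left _ _ (Ideal.subset_span ⟨i, rfl⟩))
        (Ideal.mul_mem_left _ _ hp)

lemma mem_span_of_eval_zero {w : Fin m → ℂ} {p : MvPolynomial (Fin m) ℂ}
    (h : eval w p = 0) :
    p ∈ Ideal.span (Set.range fun j => (X j - C (w j) : MvPolynomial (Fin m) ℂ)) := by
  have := sub_C_eval_mem_span w p
  rwa [h, map_zero, sub_zero] at this


lemma applyDiff_eval (q p : MvPolynomial (Fin m) ℂ) (w : Fin m → ℂ) :
    applyDiff q (fun z => eval z p) w = eval w (Aop q p) := by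
  rw [applyDiff, Aop, map_sum]
  refine Finset.sum_congr rfl fun α _ => ?_
  rw [mderiv_eval, smul_eval]

end Aux

/-- For an ideal `I ⊆ ℂ[z₁,…,z_m]`, a point `w₀`, and `J = 𝔪_{w₀} I`,
the characteristic space of `J` at `w₀` is
`V_{w₀}(J) = {q : ∂q/∂z_j ∈ V_{w₀}(I) for all j}`. -/

theorem stmt6 {m : ℕ} (I : Ideal (MvPolynomial (Fin m) ℂ)) (w₀ : Fin m → ℂ) :
    charSpaceI w₀ (RingHom.ker (MvPolynomial.eval w₀ :
        MvPolynomial (Fin m) ℂ →+* ℂ) * I) =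
      {q : MvPolynomial (Fin m) ℂ |
        ∀ j : Fin m, MvPolynomial.pderiv j q ∈ charSpaceI w₀ I} := by
  ext q
  simp only [charSpaceI, Set.mem_setOf_eq]
  constructor
  · intro h j f hf
    have hx : (X j - C (w₀ j) : MvPolynomial (Fin m) ℂ)
        ∈ RingHom.ker (MvPolynomial.eval w₀ : MvPolynomial (Fin m) ℂ →+* ℂ) := by
      simp [RingHom.mem_ker]
    have hmem := Ideal.mul_mem_mul hx hf
    have h0 := h _ hmem
    rw [applyDiff_eval, Aop_leibniz, map_add, map_mul, map_sub, eval_X, eval_C,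
      sub_self, zero_mul, zero_add] at h0
    rw [applyDiff_eval]
    exact h0
  · intro h p hp
    rw [applyDiff_eval]
    refine Submodule.mul_induction_on hp ?_ ?_
    · intro g hg f hf
      have hspan : g ∈ Ideal.span
          (Set.range fun j => (X j - C (w₀ j) : MvPolynomial (Fin m) ℂ)) :=
        mem_span_of_eval_zero (RingHom.mem_ker.mp hg)
      refine Submodule.span_induction
        (p := fun g _ => ∀ f ∈ I, eval w₀ (Aop q (g * f)) = 0) ?_ ?_ ?_ ?_ hspan f hf
      · rintro x ⟨j, rfl⟩ f hf
        rw [Aop_leibniz, map_add, map_mul, map_sub, eval_X, eval_C, sub_self,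
          zero_mul, zero_add]
        have := h j f hf
        rwa [applyDiff_eval] at this
      · intro f hf
        rw [zero_mul, Aop_zero_right, map_zero]
      · intro x y hx hy hx' hy' f hf
        rw [add_mul, Aop_add_right, map_add, hx' f hf, hy' f hf, add_zero]
      · intro r x hx hx' f hf
        have hrf : r * f ∈ I := I.mul_mem_left r hf
        have := hx' (r * f) hrf
        rw [smul_eq_mul, show r * x * f = x * (r * f) by ring]
        exact this
    · intro x y hx hy
      rw [Aop_add_right, map_add, hx, hy, add_zero]
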